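/- Let E be an n-dimensional solvable evolution algebra with maximum index of solvability. Then the penultimate term of its derived series, E^(n-1), has at most two subalgebras (besides 0 and itself proper ones are one-dimensional). -/

import Mathlib

open Submodule

variable {K : Type} [Field K] {E : Type} [AddCommGroup E] [Module K E]

/-- The product of two submodules under a bilinear multiplication. -/
def mulSet (μ : E →ₗ[K] E →ₗ[K] E) (U V : Submodule K E) : Submodule K E :=
  Submodule.span K {z | ∃ u ∈ U, ∃ v ∈ V, z = μ u v}

/-- Derived series starting from a submodule: `dser μ I 0 = I`,
`dser μ I (k+1) = (dser μ I k)·(dser μ I k)`.  Thus `dser μ ⊤ (k-1) = E^(k)`. -/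
def dser (μ : E →ₗ[K] E →ₗ[K] E) (I : Submodule K E) : ℕ → Submodule K E
  | 0 => I
  | k + 1 => mulSet μ (dser μ I k) (dser μ I k)

/-- Lower central-type series: `lowerPow μ k = E^(k+1)` where
`E^1 = E` and `E^(k+1) = Σ_{i=1}^k E^i E^(k+1-i)`. -/
def lowerPow (μ : E →ₗ[K] E →ₗ[K] E) : ℕ → Submodule K E
  | 0 => ⊤
  | k + 1 => ⨆ i : Fin (k + 1), mulSet μ (lowerPow μ i.1) (lowerPow μ (k - i.1))
  decreasing_by
  · exact i.2
  · omega

/-- A submodule closed under the multiplication. -/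
def IsSubalg (μ : E →ₗ[K] E →ₗ[K] E) (U : Submodule K E) : Prop :=
  ∀ x ∈ U, ∀ y ∈ U, μ x y ∈ U

/-- A (two-sided) ideal. -/
def IsIdeal (μ : E →ₗ[K] E →ₗ[K] E) (I : Submodule K E) : Prop :=
  ∀ x ∈ I, ∀ y : E, μ x y ∈ I ∧ μ y x ∈ I

/-- Subalgebra generated by a set. -/
def gen (μ : E →ₗ[K] E →ₗ[K] E) (s : Set E) : Submodule K E :=
  sInf {W | IsSubalg μ W ∧ s ⊆ W}

/-- Quasi-ideal: the subalgebra generated together with any subalgebra is the vector-space sum. -/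
def QuasiIdeal (μ : E →ₗ[K] E →ₗ[K] E) (U : Submodule K E) : Prop :=
  IsSubalg μ U ∧ ∀ V : Submodule K E, IsSubalg μ V → gen μ (↑U ∪ ↑V) = U ⊔ V

/-- The subalgebra lattice is modular. -/
def ModularLat (μ : E →ₗ[K] E →ₗ[K] E) : Prop :=
  ∀ U V W : Submodule K E, IsSubalg μ U → IsSubalg μ V → IsSubalg μ W → U ≤ W →
    gen μ (↑U ∪ ↑(V ⊓ W)) = gen μ (↑U ∪ ↑V) ⊓ W

/-- The subalgebra lattice is distributive. -/
def DistribLat (μ : E →ₗ[K] E →ₗ[K] E) : Prop :=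
  ∀ U V W : Submodule K E, IsSubalg μ U → IsSubalg μ V → IsSubalg μ W →
    gen μ (↑U ∪ ↑(V ⊓ W)) = gen μ (↑U ∪ ↑V) ⊓ gen μ (↑U ∪ ↑W)

/-- Supersolvable: a complete flag of ideals. -/
def Supersolvable (μ : E →ₗ[K] E →ₗ[K] E) : Prop :=
  ∃ I : ℕ → Submodule K E, (∀ i, IsIdeal μ (I i)) ∧ (∀ i, I i ≤ I (i + 1)) ∧
    (∀ i ≤ Module.finrank K E, Module.finrank K (I i) = i) ∧ I (Module.finrank K E) = ⊤

/-- Maximal subalgebra `A` of the subalgebra `B`. -/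
def MaxIn (μ : E →ₗ[K] E →ₗ[K] E) (A B : Submodule K E) : Prop :=
  A ≤ B ∧ A ≠ B ∧ ∀ W : Submodule K E, IsSubalg μ W → A ≤ W → W ≤ B → W = A ∨ W = B

lemma mem_mulSet {μ : E →ₗ[K] E →ₗ[K] E} {U V : Submodule K E} {u v : E}
    (hu : u ∈ U) (hv : v ∈ V) : μ u v ∈ mulSet μ U V :=
  subset_span ⟨u, hu, v, hv, rfl⟩

lemma mulSet_mono {μ : E →ₗ[K] E →ₗ[K] E} {U V U' V' : Submodule K E}
    (h1 : U ≤ U') (h2 : V ≤ V') : mulSet μ U V ≤ mulSet μ U' V' :=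
  span_mono (fun _ ⟨u, hu, v, hv, hz⟩ => ⟨u, h1 hu, v, h2 hv, hz⟩)

lemma mulSet_le {μ : E →ₗ[K] E →ₗ[K] E} {U V W : Submodule K E}
    (h : ∀ u ∈ U, ∀ v ∈ V, μ u v ∈ W) : mulSet μ U V ≤ W := by
  rw [mulSet, span_le]; rintro _ ⟨u, hu, v, hv, rfl⟩; exact h u hu v hv

lemma dser_succ_le (μ : E →ₗ[K] E →ₗ[K] E) : ∀ k, dser μ ⊤ (k + 1) ≤ dser μ ⊤ k
  | 0 => le_top
  | (k + 1) => mulSet_mono (dser_succ_le μ k) (dser_succ_le μ k)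

lemma dser_stab {μ : E →ₗ[K] E →ₗ[K] E} {I : Submodule K E} {k : ℕ}
    (h : dser μ I (k + 1) = dser μ I k) : ∀ j, dser μ I (k + j) = dser μ I k := by
  intro j; induction j with
  | zero => rfl
  | succ j ih => show mulSet μ (dser μ I (k+j)) (dser μ I (k+j)) = _; rw [ih]; exact h

lemma mu_repr {n : ℕ} (μ : E →ₗ[K] E →ₗ[K] E) (b : Module.Basis (Fin n) K E)
    (hnat : ∀ i j : Fin n, i ≠ j → μ (b i) (b j) = 0) (u v : E) :
    μ u v = ∑ i, (b.repr u i * b.repr v i) • μ (b i) (b i) := by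
  conv_lhs => rw [← b.sum_repr u, ← b.sum_repr v]
  rw [map_sum]
  refine Finset.sum_congr rfl fun x _ => ?_
  rw [map_smul, map_sum, LinearMap.sum_apply, Finset.smul_sum]
  rw [Finset.sum_eq_single x (fun j _ hj => by
    rw [LinearMap.map_smul₂, hnat j x hj, smul_zero, smul_zero]) (by simp)]
  rw [LinearMap.map_smul₂, smul_smul, mul_comm]

lemma gen_of_rank_one [FiniteDimensional K E] {P : Submodule K E}
    (h : Module.finrank K P = 1) : ∃ v : E, v ≠ 0 ∧ P = span K {v} := by
  have hne : P ≠ ⊥ := by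
    intro hb; rw [hb, finrank_bot] at h; omega
  obtain ⟨v, hv, hv0⟩ := Submodule.exists_mem_ne_zero_of_ne_bot hne
  refine ⟨v, hv0, (Submodule.eq_of_le_of_finrank_le ((span_singleton_le_iff_mem v P).2 hv)
    ?_).symm⟩
  rw [h, finrank_span_singleton hv0]

/-- if `E` is an `n`-dimensional solvable evolution algebra with maximum
index of solvability, then `E^(n-1)` has at most two one-dimensional subalgebras. -/
theorem stmt3 {n : ℕ} (hn : 2 ≤ n) (μ : E →ₗ[K] E →ₗ[K] E)
    (hcomm : ∀ x y : E, μ x y = μ y x)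
    (b : Module.Basis (Fin n) K E)
    (hnat : ∀ i j : Fin n, i ≠ j → μ (b i) (b j) = 0)
    (hmaxsolv : dser μ ⊤ n = ⊥ ∧ dser μ ⊤ (n - 1) ≠ ⊥) :
    Set.ncard {U : Submodule K E |
      U ≤ dser μ ⊤ (n - 2) ∧ IsSubalg μ U ∧ Module.finrank K U = 1} ≤ 2 := by
  haveI : FiniteDimensional K E := Module.Basis.finiteDimensional_of_finite b
  obtain ⟨m, rfl⟩ : ∃ m, n = m + 2 := ⟨n - 2, by omega⟩
  have hfr : Module.finrank K E = m + 2 := by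
    rw [Module.finrank_eq_card_basis b, Fintype.card_fin]
  rw [show m + 2 - 1 = m + 1 from by omega] at hmaxsolv
  rw [show m + 2 - 2 = m from by omega]
  obtain ⟨hsolv, hne⟩ := hmaxsolv
  have hdsucc : ∀ k, dser μ ⊤ (k + 1) = mulSet μ (dser μ ⊤ k) (dser μ ⊤ k) := fun _ => rfl
  -- dimensions of the derived series
  have hstrict : ∀ k, k < m + 2 → dser μ ⊤ (k + 1) < dser μ ⊤ k := by
    intro k hk
    refine lt_of_le_of_ne (dser_succ_le μ k) fun heq => hne ?_
    have h1 := dser_stab heq (m + 1 - k)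
    have h2 := dser_stab heq (m + 2 - k)
    rw [show k + (m + 1 - k) = m + 1 from by omega] at h1
    rw [show k + (m + 2 - k) = m + 2 from by omega] at h2
    rw [h1, ← h2, hsolv]
  have upper : ∀ k, k ≤ m + 2 → Module.finrank K (dser μ ⊤ k) + k ≤ m + 2 := by
    intro k; induction k with
    | zero =>
      intro _
      have h0 : Module.finrank K (dser μ ⊤ 0 : Submodule K E) = m + 2 := by
        show Module.finrank K (⊤ : Submodule K E) = m + 2
        rw [finrank_top, hfr]
      omega
    | succ k ih =>
      intro hk
      have h1 := Submodule.finrank_lt_finrank_of_lt (hstrict k (by omega))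
      have h2 := ih (by omega)
      omega
  have lower : ∀ j, j ≤ m + 2 → j ≤ Module.finrank K (dser μ ⊤ (m + 2 - j)) := by
    intro j; induction j with
    | zero => intro _; omega
    | succ j ih =>
      intro hj
      have h1 := Submodule.finrank_lt_finrank_of_lt (hstrict (m + 2 - (j + 1)) (by omega))
      rw [show m + 2 - (j + 1) + 1 = m + 2 - j from by omega] at h1
      have h2 := ih (by omega)
      omega
  have hdim : ∀ k, k ≤ m + 2 → Module.finrank K (dser μ ⊤ k) = m + 2 - k := by
    intro k hk
    have h1 := upper k hk
    have h2 := lower (m + 2 - k) (by omega)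
    rw [show m + 2 - (m + 2 - k) = k from by omega] at h2
    omega
  -- the generator of the last nonzero term
  obtain ⟨c, hc0, hcspan⟩ := gen_of_rank_one (show Module.finrank K (dser μ ⊤ (m + 1)) = 1 by rw [hdim (m + 1) (by omega)]; omega)
  have hcmem : c ∈ dser μ ⊤ (m + 1) := by
    rw [hcspan]; exact mem_span_singleton_self c
  have hcc : μ c c = 0 := by
    have h := mem_mulSet (μ := μ) hcmem hcmem
    rw [← hdsucc, hsolv, Submodule.mem_bot] at h
    exact h
  -- setup of the coordinate map
  set cv : Fin (m + 2) → E := fun i => μ (b i) (b i) with hcv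
  set φ : (Fin (m + 2) → K) →ₗ[K] E := Fintype.linearCombination K cv with hφ
  have hφsum : ∀ a : Fin (m + 2) → K, φ a = ∑ i, a i • μ (b i) (b i) := fun a =>
    Fintype.linearCombination_apply K cv a
  have hrange : LinearMap.range φ = dser μ ⊤ 1 := by
    rw [hφ, Fintype.range_linearCombination]
    apply le_antisymm
    · rw [span_le]; rintro _ ⟨i, rfl⟩
      rw [hdsucc 0]
      exact mem_mulSet trivial trivial
    · rw [hdsucc 0]
      refine mulSet_le fun u _ v _ => ?_
      rw [mu_repr μ b hnat u v]
      exact Submodule.sum_mem _ fun i _ => Submodule.smul_mem _ _ (subset_span ⟨i, rfl⟩)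
  have hkerrank : Module.finrank K (LinearMap.ker φ) = 1 := by
    have h1 := LinearMap.finrank_range_add_finrank_ker φ
    rw [hrange, hdim 1 (by omega)] at h1
    have h2 : Module.finrank K (Fin (m + 2) → K) = m + 2 := by
      rw [Module.finrank_pi, Fintype.card_fin]
    omega
  obtain ⟨w, hw0, hwspan⟩ := gen_of_rank_one hkerrank
  -- square-zero elements have coordinates controlled by w
  have key : ∀ z : E, μ z z = 0 → ∃ l : K, ∀ i, b.repr z i * b.repr z i = l * w i := by
    intro z hz
    have hmem : (fun i => b.repr z i * b.repr z i) ∈ LinearMap.ker φ := by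
      rw [LinearMap.mem_ker, hφsum, ← mu_repr μ b hnat z z]
      exact hz
    rw [hwspan, mem_span_singleton] at hmem
    obtain ⟨l, hl⟩ := hmem
    exact ⟨l, fun i => by
      have h := congrFun hl i
      simpa [Pi.smul_apply, smul_eq_mul] using h.symm⟩
  have key0 : ∀ z : E, z ≠ 0 → ∀ l : K, (∀ i, b.repr z i * b.repr z i = l * w i) → l ≠ 0 := by
    intro z hz l hl h0
    apply hz
    rw [← (b.repr).map_eq_zero_iff]
    ext i
    have h := hl i
    rw [h0, zero_mul, mul_self_eq_zero] at h
    simpa using h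
  -- start the contradiction argument
  by_contra hcard
  push_neg at hcard
  have hfin := Set.finite_of_ncard_ne_zero (s := {U : Submodule K E |
      U ≤ dser μ ⊤ m ∧ IsSubalg μ U ∧ Module.finrank K U = 1}) (by omega)
  obtain ⟨U₁, hU₁, U₂, hU₂, U₃, hU₃, h12, h13, h23⟩ := (Set.two_lt_ncard hfin).mp hcard
  simp only [Set.mem_setOf_eq] at hU₁ hU₂ hU₃
  obtain ⟨hU₁A, hU₁s, hU₁r⟩ := hU₁
  obtain ⟨hU₂A, hU₂s, hU₂r⟩ := hU₂
  obtain ⟨hU₃A, hU₃s, hU₃r⟩ := hU₃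
  obtain ⟨z₁, hz₁, hU₁z⟩ := gen_of_rank_one hU₁r
  obtain ⟨z₂, hz₂, hU₂z⟩ := gen_of_rank_one hU₂r
  obtain ⟨z₃, hz₃, hU₃z⟩ := gen_of_rank_one hU₃r
  -- every generator is square-zero
  have hnull : ∀ U : Submodule K E, U ≤ dser μ ⊤ m → IsSubalg μ U →
      Module.finrank K U = 1 → ∀ z : E, z ≠ 0 → U = span K {z} → μ z z = 0 := by
    intro U hUA hUs hUr z hz hUz
    have hzU : z ∈ U := hUz ▸ mem_span_singleton_self z
    have hq1 : μ z z ∈ dser μ ⊤ (m + 1) := by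
      rw [hdsucc]
      exact mem_mulSet (hUA hzU) (hUA hzU)
    have hq2 : μ z z ∈ U := hUs z hzU z hzU
    by_contra hq0
    rw [hcspan, mem_span_singleton] at hq1
    obtain ⟨a, ha⟩ := hq1
    have ha0 : a ≠ 0 := by rintro rfl; rw [zero_smul] at ha; exact hq0 ha.symm
    have hcU : c ∈ U := by
      have h := Submodule.smul_mem U a⁻¹ (ha ▸ hq2)
      rwa [smul_smul, inv_mul_cancel₀ ha0, one_smul] at h
    have hUc : U = span K {c} := by
      refine (Submodule.eq_of_le_of_finrank_le ((span_singleton_le_iff_mem c U).2 hcU) ?_).symm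
      rw [hUr, finrank_span_singleton hc0]
    have hzc : z ∈ span K {c} := hUc ▸ hzU
    rw [mem_span_singleton] at hzc
    obtain ⟨t, ht⟩ := hzc
    apply hq0
    rw [← ht, map_smul, LinearMap.map_smul₂, hcc, smul_zero, smul_zero]
  have hz₁n : μ z₁ z₁ = 0 := hnull U₁ hU₁A hU₁s hU₁r z₁ hz₁ hU₁z
  have hz₂n : μ z₂ z₂ = 0 := hnull U₂ hU₂A hU₂s hU₂r z₂ hz₂ hU₂z
  have hz₃n : μ z₃ z₃ = 0 := hnull U₃ hU₃A hU₃s hU₃r z₃ hz₃ hU₃z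
  obtain ⟨l₁, hl₁⟩ := key z₁ hz₁n
  obtain ⟨l₂, hl₂⟩ := key z₂ hz₂n
  obtain ⟨l₃, hl₃⟩ := key z₃ hz₃n
  have hl₁0 := key0 z₁ hz₁ l₁ hl₁
  have hl₂0 := key0 z₂ hz₂ l₂ hl₂
  have hl₃0 := key0 z₃ hz₃ l₃ hl₃
  have hlines : ∀ (x y : E) (s : K), s ≠ 0 → y = s • x → span K {y} = span K {x} := by
    intro x y s hs hyx
    rw [hyx]
    exact Submodule.span_singleton_smul_eq (IsUnit.mk0 s hs) x
  by_cases h2 : (2 : K) = 0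
  · -- characteristic two: two distinct null lines are impossible
    obtain ⟨i₀, hi₀⟩ : ∃ i, b.repr z₁ i ≠ 0 := by
      by_contra h; push_neg at h
      exact hz₁ ((b.repr).map_eq_zero_iff.mp (by ext i; simpa using h i))
    have hwi₀ : w i₀ ≠ 0 := by
      intro hw
      have h := hl₁ i₀
      rw [hw, mul_zero, mul_self_eq_zero] at h
      exact hi₀ h
    have hz₂i₀ : b.repr z₂ i₀ ≠ 0 := by
      intro hzz
      have h := hl₂ i₀
      rw [hzz, zero_mul] at h
      exact hl₂0 (by
        have := h.symm
        rcases mul_eq_zero.mp this with h' | h'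
        · exact h'
        · exact absurd h' hwi₀)
    set s : K := b.repr z₂ i₀ * (b.repr z₁ i₀)⁻¹ with hs
    have hs0 : s ≠ 0 := mul_ne_zero hz₂i₀ (inv_ne_zero hi₀)
    have hpt : ∀ i, b.repr z₂ i = s * b.repr z₁ i := by
      intro i
      have e1 := hl₁ i
      have e2 := hl₂ i
      have e1' := hl₁ i₀
      have e2' := hl₂ i₀
      have hsq : (b.repr z₂ i * b.repr z₁ i₀) * (b.repr z₂ i * b.repr z₁ i₀) =
          (b.repr z₁ i * b.repr z₂ i₀) * (b.repr z₁ i * b.repr z₂ i₀) := by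
        linear_combination (b.repr z₁ i₀ * b.repr z₁ i₀) * e2 + (l₂ * w i) * e1' -
          (b.repr z₂ i₀ * b.repr z₂ i₀) * e1 - (l₁ * w i) * e2'
      have heq : b.repr z₂ i * b.repr z₁ i₀ = b.repr z₁ i * b.repr z₂ i₀ := by
        rcases mul_self_eq_mul_self_iff.mp hsq with h | h
        · exact h
        · have hnn : b.repr z₁ i * b.repr z₂ i₀ + b.repr z₁ i * b.repr z₂ i₀ = 0 := by
            linear_combination (b.repr z₁ i * b.repr z₂ i₀) * h2
          linear_combination h - hnn
      rw [hs, mul_right_comm, eq_mul_inv_iff_mul_eq₀ hi₀]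
      linear_combination heq
    have hz21 : z₂ = s • z₁ := by
      apply (b.repr).injective
      ext i
      rw [map_smul]
      simpa using hpt i
    exact h12 (by rw [hU₁z, hU₂z, hlines z₁ z₂ s hs0 hz21])
  · -- characteristic ≠ 2
    have hinter : U₁ ⊓ U₂ = ⊥ := by
      by_contra hib
      obtain ⟨x, hx, hx0⟩ := Submodule.exists_mem_ne_zero_of_ne_bot hib
      have e1 : U₁ = span K {x} := by
        refine (Submodule.eq_of_le_of_finrank_le ((span_singleton_le_iff_mem x U₁).2 hx.1) ?_).symm
        rw [hU₁r, finrank_span_singleton hx0]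
      have e2 : U₂ = span K {x} := by
        refine (Submodule.eq_of_le_of_finrank_le ((span_singleton_le_iff_mem x U₂).2 hx.2) ?_).symm
        rw [hU₂r, finrank_span_singleton hx0]
      exact h12 (e1.trans e2.symm)
    have hsup2 : Module.finrank K (U₁ ⊔ U₂ : Submodule K E) = 2 := by
      have h := Submodule.finrank_sup_add_finrank_inf_eq U₁ U₂
      rw [hinter, hU₁r, hU₂r, finrank_bot] at h
      omega
    have hA : (U₁ ⊔ U₂ : Submodule K E) = dser μ ⊤ m := by
      refine Submodule.eq_of_le_of_finrank_le (sup_le hU₁A hU₂A) ?_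
      rw [hsup2, hdim m (by omega)]
      omega
    have hspan2 : dser μ ⊤ m = span K {z₁, z₂} := by
      rw [← hA, hU₁z, hU₂z, ← Submodule.span_union, Set.singleton_union]
    have hz₃mem : z₃ ∈ span K ({z₁, z₂} : Set E) := by
      rw [← hspan2]
      exact hU₃A (hU₃z ▸ mem_span_singleton_self z₃)
    rw [mem_span_pair] at hz₃mem
    obtain ⟨a, d, had⟩ := hz₃mem
    have ha0 : a ≠ 0 := by
      rintro rfl
      rw [zero_smul, zero_add] at had
      have hd0 : d ≠ 0 := by rintro rfl; rw [zero_smul] at had; exact hz₃ had.symm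
      exact h23 (by rw [hU₂z, hU₃z, hlines z₂ z₃ d hd0 had.symm])
    have hd0 : d ≠ 0 := by
      rintro rfl
      rw [zero_smul, add_zero] at had
      exact h13 (by rw [hU₁z, hU₃z, hlines z₁ z₃ a ha0 had.symm])
    have hco : ∀ i, b.repr z₃ i = a * b.repr z₁ i + d * b.repr z₂ i := by
      intro i
      rw [← had]
      simp
    have hpt : ∀ i, b.repr z₁ i * b.repr z₂ i =
        ((l₃ - a * a * l₁ - d * d * l₂) / (2 * a * d)) * w i := by
      intro i
      have e1 := hl₁ i
      have e2 := hl₂ i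
      have e3 := hl₃ i
      rw [hco i] at e3
      have h2ad : 2 * a * d ≠ 0 := by
        intro h
        rcases mul_eq_zero.mp h with h' | h'
        · rcases mul_eq_zero.mp h' with h'' | h''
          · exact h2 h''
          · exact ha0 h''
        · exact hd0 h'
      field_simp
      linear_combination e3 - a * a * e1 - d * d * e2
    have hker : (fun i => b.repr z₁ i * b.repr z₂ i) ∈ LinearMap.ker φ := by
      rw [hwspan, mem_span_singleton]
      exact ⟨(l₃ - a * a * l₁ - d * d * l₂) / (2 * a * d), by
        funext i
        rw [Pi.smul_apply, smul_eq_mul, ← hpt i]⟩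
    have hz12 : μ z₁ z₂ = 0 := by
      rw [LinearMap.mem_ker, hφsum] at hker
      rw [mu_repr μ b hnat z₁ z₂]
      exact hker
    apply hne
    rw [hdsucc m]
    refine le_bot_iff.mp (mulSet_le fun u hu v hv => ?_)
    rw [hspan2, mem_span_pair] at hu hv
    obtain ⟨p, q, hu⟩ := hu
    obtain ⟨r, t, hv⟩ := hv
    rw [Submodule.mem_bot, ← hu, ← hv]
    simp only [map_add, map_smul, LinearMap.add_apply, LinearMap.smul_apply]
    rw [hz₁n, hz₂n, hz12, hcomm z₂ z₁, hz12]
    simp
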